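/- Let G be a star centered at u with d ≥ 1 leaves, and suppose there are integers Δ ≥ 3 and q ≥ Δ+2 with d ≤ Δ−1, |L(u)| ≥ q − Δ + d, and |L(w)| ≥ q − Δ + 1 for every leaf w, where all lists are subsets of [q]. Let σ be a uniformly random proper list-coloring. Then for every c ∈ L(u): P(σ_u ≠ c)/P(σ_u = c) ≥ d · Φ(Δ,q), where Φ(Δ,q) = ((q−2)/(Δ−1))·[(1 − 1/(q−Δ+1))^{q−Δ+1}]^{(Δ−1)/(q−2)}. -/

import Mathlib

open Finset

lemma base_mono (s : ℕ) (hs : 2 ≤ s) : ∀ m, s ≤ m → (1 - 1/(s:ℝ))^s ≤ (1-1/(m:ℝ))^m := by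
  intro m hm
  induction m, hm using Nat.le_induction with
  | base => exact le_refl _
  | succ m hm ih =>
    refine ih.trans ?_
    have hm2 : 2 ≤ m := hs.trans hm
    have hmR : (2:ℝ) ≤ m := by exact_mod_cast hm2
    have hm0 : (0:ℝ) < m := by linarith
    have hinv : 1/((m:ℝ)^2) ≤ 1/2 := by
      rw [div_le_div_iff₀ (by positivity) (by norm_num)]; nlinarith
    have hinv0 : (0:ℝ) < 1/((m:ℝ)^2) := by positivity
    have key : (1 - 1/((m:ℝ)^2))^m ≤ (m:ℝ)/((m:ℝ)+1) := by
      have h := one_add_mul_le_pow (a := 1/(m:ℝ)^2) (by linarith) m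
      have heq : (m:ℝ) * (1/(m:ℝ)^2) = 1/m := by field_simp
      rw [heq] at h
      have hpos : (0:ℝ) < (1 + 1/(m:ℝ)^2)^m := by positivity
      have hprod : (1 - 1/(m:ℝ)^2) * (1 + 1/(m:ℝ)^2) ≤ 1 := by nlinarith
      have h1 : (1 - 1/(m:ℝ)^2)^m ≤ 1/(1 + 1/(m:ℝ)^2)^m := by
        rw [le_div_iff₀ hpos, ← mul_pow]
        exact pow_le_one₀ (by nlinarith) hprod
      have h2 : 1/(1 + 1/(m:ℝ)^2)^m ≤ 1/(1 + 1/(m:ℝ)) := by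
        apply one_div_le_one_div_of_le (by positivity) h
      refine h1.trans (h2.trans ?_)
      rw [div_le_div_iff₀ (by positivity) (by positivity)]
      field_simp; exact le_refl _
    have hsplit : (1 - 1/(m:ℝ)) = (1 - 1/((m:ℝ)+1)) * (1 - 1/(m:ℝ)^2) := by
      field_simp; ring
    have hb0 : (0:ℝ) ≤ 1 - 1/((m:ℝ)+1) := by
      have : 1/((m:ℝ)+1) ≤ 1 := by rw [div_le_one (by linarith)]; linarith
      linarith
    push_cast
    calc (1-1/(m:ℝ))^m = (1-1/((m:ℝ)+1))^m * (1-1/(m:ℝ)^2)^m := by rw [hsplit, mul_pow]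
      _ ≤ (1-1/((m:ℝ)+1))^m * ((m:ℝ)/((m:ℝ)+1)) := by
          exact mul_le_mul_of_nonneg_left key (pow_nonneg hb0 m)
      _ = (1-1/((m:ℝ)+1))^(m+1) := by
          rw [pow_succ]; congr 1; field_simp; ring

lemma count_fiber {q d : ℕ} (Lu : Finset (Fin q)) (Lw : Fin d → Finset (Fin q))
    (x : Fin q) (hx : x ∈ Lu) :
    (((univ : Finset (Fin q × (Fin d → Fin q))).filter
        (fun ω => ω.1 ∈ Lu ∧ ∀ t, ω.2 t ∈ Lw t ∧ ω.2 t ≠ ω.1)).filter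
      (fun ω => ω.1 = x)).card = ∏ t, ((Lw t).erase x).card := by
  have hset : (((univ : Finset (Fin q × (Fin d → Fin q))).filter
        (fun ω => ω.1 ∈ Lu ∧ ∀ t, ω.2 t ∈ Lw t ∧ ω.2 t ≠ ω.1)).filter
      (fun ω => ω.1 = x)) = {x} ×ˢ Fintype.piFinset (fun t => (Lw t).erase x) := by
    ext ⟨a, f⟩
    simp only [mem_filter, mem_univ, true_and, mem_product, mem_singleton,
      Fintype.mem_piFinset, mem_erase]
    constructor
    · rintro ⟨⟨-, h2⟩, rfl⟩
      exact ⟨rfl, fun t => ⟨(h2 t).2, (h2 t).1⟩⟩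
    · rintro ⟨rfl, h⟩
      exact ⟨⟨hx, fun t => ⟨(h t).2, (h t).1⟩⟩, rfl⟩
  rw [hset, card_product, card_singleton, one_mul, Fintype.card_piFinset]

/-- Φ(Δ,q) = ((q-2)/(Δ-1)) · [(1 - 1/(q-Δ+1))^{q-Δ+1}]^{(Δ-1)/(q-2)} -/
noncomputable def Phi (Δ q : ℕ) : ℝ :=
  (((q : ℝ) - 2) / ((Δ : ℝ) - 1)) *
    ((1 - 1 / ((q : ℝ) - (Δ : ℝ) + 1)) ^ ((q : ℝ) - (Δ : ℝ) + 1)) ^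
      (((Δ : ℝ) - 1) / ((q : ℝ) - 2))

set_option maxHeartbeats 1000000 in
/-- Star centered at u with d ≥ 1 leaves, Δ ≥ 3, q ≥ Δ+2, d ≤ Δ−1, lists ⊆ [q]
with |L(u)| ≥ q−Δ+d and |L(w)| ≥ q−Δ+1 for each leaf w; σ uniform proper
list-coloring. Then P(σ_u ≠ c)/P(σ_u = c) ≥ d·Φ(Δ,q) for every c ∈ L(u). -/
theorem stmt_17 (d Δ q : ℕ) (hd : 1 ≤ d) (hΔ : 3 ≤ Δ) (hq : Δ + 2 ≤ q)
    (hdΔ : d ≤ Δ - 1) (Lu : Finset (Fin q)) (Lw : Fin d → Finset (Fin q))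
    (hLu : (q : ℝ) - (Δ : ℝ) + (d : ℝ) ≤ (Lu.card : ℝ))
    (hLw : ∀ t, (q : ℝ) - (Δ : ℝ) + 1 ≤ ((Lw t).card : ℝ))
    (c : Fin q) (hc : c ∈ Lu) :
    let Ω : Finset (Fin q × (Fin d → Fin q)) :=
      univ.filter (fun ω => ω.1 ∈ Lu ∧ ∀ t, ω.2 t ∈ Lw t ∧ ω.2 t ≠ ω.1)
    (d : ℝ) * Phi Δ q ≤
      (((Ω.filter (fun ω => ω.1 ≠ c)).card : ℝ) / (Ω.card : ℝ)) /
        (((Ω.filter (fun ω => ω.1 = c)).card : ℝ) / (Ω.card : ℝ)) := by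
  intro Ω
  -- basic real facts
  have hΔR : (3:ℝ) ≤ (Δ:ℝ) := by exact_mod_cast hΔ
  have hqR : (Δ:ℝ) + 2 ≤ (q:ℝ) := by exact_mod_cast hq
  have hdR : (1:ℝ) ≤ (d:ℝ) := by exact_mod_cast hd
  have hdΔR : (d:ℝ) ≤ (Δ:ℝ) - 1 := by
    have := (Nat.cast_le (α := ℝ)).2 hdΔ
    rwa [Nat.cast_sub (by omega), Nat.cast_one] at this
  -- s and b
  set s : ℕ := q - Δ + 1 with hs_def
  have hsR : (s:ℝ) = (q:ℝ) - (Δ:ℝ) + 1 := by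
    rw [hs_def, Nat.cast_add, Nat.cast_sub (by omega : Δ ≤ q), Nat.cast_one]
  have hs3 : (3:ℕ) ≤ s := by omega
  have hs3R : (3:ℝ) ≤ (s:ℝ) := by exact_mod_cast hs3
  set b : ℝ := (1 - 1/(s:ℝ))^s with hb_def
  have hb0 : 0 < b := by
    apply pow_pos; rw [sub_pos, div_lt_one (by linarith)]; linarith
  have hb1 : b ≤ 1 := by
    apply pow_le_one₀ (by rw [sub_nonneg, div_le_one (by linarith)]; linarith)
    rw [sub_le_self_iff]; positivity
  -- list sizes
  have hm3 : ∀ t, 3 ≤ (Lw t).card := by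
    intro t; have := hLw t
    have : (3:ℝ) ≤ ((Lw t).card : ℝ) := by linarith
    exact_mod_cast this
  have hms : ∀ t, s ≤ (Lw t).card := by
    intro t; have := hLw t
    have : (s:ℝ) ≤ ((Lw t).card : ℝ) := by rw [hsR]; linarith
    exact_mod_cast this
  have herase_pos : ∀ (y : Fin q) (t : Fin d), 0 < (((Lw t).erase y).card : ℝ) := by
    intro y t
    have h1 : (Lw t).card - 1 ≤ ((Lw t).erase y).card := by
      have := Finset.pred_card_le_card_erase (a := y) (s := Lw t); omega
    have := hm3 t
    have : 2 ≤ ((Lw t).erase y).card := by omega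
    exact_mod_cast Nat.lt_of_lt_of_le (by norm_num) this
  -- real product N
  set Nr : Fin q → ℝ := fun y => ∏ t, (((Lw t).erase y).card : ℝ) with hNr_def
  have hNr_pos : ∀ y, 0 < Nr y := fun y => Finset.prod_pos (fun t _ => herase_pos y t)
  -- counting
  set E : Finset (Fin q) := Lu.erase c with hE_def
  have hB : ((Ω.filter (fun ω => ω.1 = c)).card : ℝ) = Nr c := by
    rw [count_fiber Lu Lw c hc]; push_cast; rfl
  have hA : ((Ω.filter (fun ω => ω.1 ≠ c)).card : ℝ) = ∑ x ∈ E, Nr x := by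
    have hfib : (Ω.filter (fun ω => ω.1 ≠ c)).card
        = ∑ x ∈ E, ((Ω.filter (fun ω => ω.1 ≠ c)).filter (fun ω => ω.1 = x)).card := by
      apply Finset.card_eq_sum_card_fiberwise
      intro ω hω
      simp only [Finset.mem_coe, mem_filter, mem_univ, true_and, Ω] at hω
      exact Finset.mem_erase.2 ⟨hω.2, hω.1.1⟩
    rw [hfib]
    push_cast
    apply Finset.sum_congr rfl
    intro x hx
    have hxc : x ≠ c := (Finset.mem_erase.1 hx).1
    have hxLu : x ∈ Lu := (Finset.mem_erase.1 hx).2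
    have : (Ω.filter (fun ω => ω.1 ≠ c)).filter (fun ω => ω.1 = x)
        = Ω.filter (fun ω => ω.1 = x) := by
      rw [Finset.filter_filter]
      apply Finset.filter_congr
      intro ω _
      constructor
      · rintro ⟨-, h⟩; exact h
      · rintro rfl; exact ⟨hxc, rfl⟩
    rw [this, count_fiber Lu Lw x hxLu]
    push_cast; rfl
  -- positivity of cardinals
  have hBpos : (0:ℝ) < ((Ω.filter (fun ω => ω.1 = c)).card : ℝ) := hB ▸ hNr_pos c
  have hΩpos : (0:ℝ) < (Ω.card : ℝ) := by
    have hsub : (Ω.filter (fun ω => ω.1 = c)) ⊆ Ω := Finset.filter_subset _ _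
    have := Finset.card_le_card hsub
    have : ((Ω.filter (fun ω => ω.1 = c)).card : ℝ) ≤ (Ω.card : ℝ) := by exact_mod_cast this
    linarith
  -- reduce the ratio
  rw [div_div_div_comm, div_self (ne_of_gt hΩpos), div_one, hA, hB]
  -- exponents
  set e : Fin q → ℝ := fun x => ∑ t, (if x ∈ Lw t then (1:ℝ) else 0) / ((Lw t).card : ℝ)
    with he_def
  -- per-factor bound
  have hfac : ∀ (x : Fin q) (t : Fin d),
      b ^ ((if x ∈ Lw t then (1:ℝ) else 0) / ((Lw t).card : ℝ))
        ≤ (((Lw t).erase x).card : ℝ) / (((Lw t).erase c).card : ℝ) := by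
    intro x t
    have hmpos : (0:ℝ) < ((Lw t).card : ℝ) := by
      have := hm3 t; exact_mod_cast Nat.lt_of_lt_of_le (by norm_num) this
    have hec_le : (((Lw t).erase c).card : ℝ) ≤ ((Lw t).card : ℝ) := by
      exact_mod_cast Finset.card_le_card (Finset.erase_subset _ _)
    by_cases hx : x ∈ Lw t
    · simp only [hx, if_true]
      have hcard : (((Lw t).erase x).card : ℝ) = ((Lw t).card : ℝ) - 1 := by
        rw [Finset.card_erase_of_mem hx,
          Nat.cast_sub (by have := hm3 t; omega : 1 ≤ (Lw t).card), Nat.cast_one]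
      have h1 : b ^ ((1:ℝ) / ((Lw t).card:ℝ)) ≤ 1 - 1/((Lw t).card:ℝ) := by
        have hb' := base_mono s (by omega) (Lw t).card (hms t)
        rw [← hb_def] at hb'
        have hnn : (0:ℝ) ≤ 1 - 1/((Lw t).card:ℝ) := by
          rw [sub_nonneg, div_le_one hmpos]; linarith
        calc b ^ ((1:ℝ)/((Lw t).card:ℝ))
            ≤ ((1-1/((Lw t).card:ℝ))^(Lw t).card) ^ ((1:ℝ)/((Lw t).card:ℝ)) :=
              Real.rpow_le_rpow hb0.le hb' (by positivity)
          _ = 1-1/((Lw t).card:ℝ) := by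
              rw [← Real.rpow_natCast (1-1/((Lw t).card:ℝ)) (Lw t).card, ← Real.rpow_mul hnn,
                mul_one_div, div_self (ne_of_gt hmpos), Real.rpow_one]
      refine h1.trans ?_
      rw [hcard]
      have : 1 - 1/((Lw t).card:ℝ) = (((Lw t).card:ℝ) - 1)/((Lw t).card:ℝ) := by
        field_simp
      rw [this]
      have h3 : (3:ℝ) ≤ ((Lw t).card:ℝ) := by exact_mod_cast hm3 t
      apply div_le_div_of_nonneg_left (by linarith) (herase_pos c t) hec_le
    · simp only [hx, if_false, zero_div, Real.rpow_zero]
      rw [Finset.erase_eq_of_notMem hx, le_div_iff₀ (herase_pos c t), one_mul]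
      exact hec_le
  -- per-color bound
  have hratio : ∀ x : Fin q, b ^ (e x) ≤ Nr x / Nr c := by
    intro x
    have : Nr x / Nr c = ∏ t, ((((Lw t).erase x).card : ℝ) / (((Lw t).erase c).card : ℝ)) := by
      rw [hNr_def, ← Finset.prod_div_distrib]
    rw [this, he_def, Real.rpow_sum_of_pos hb0]
    exact Finset.prod_le_prod (fun t _ => Real.rpow_nonneg hb0.le _) (fun t _ => hfac x t)
  -- cardinal of E
  have hcard1 : 1 ≤ Lu.card := Finset.card_pos.2 ⟨c, hc⟩
  set n : ℝ := (E.card : ℝ) with hn_def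
  have hn : (q:ℝ) - (Δ:ℝ) + (d:ℝ) - 1 ≤ n := by
    rw [hn_def, hE_def, Finset.card_erase_of_mem hc, Nat.cast_sub hcard1, Nat.cast_one]
    linarith
  have hnpos : 0 < n := by linarith
  -- sum of exponents bound
  have hK : ∑ x ∈ E, e x ≤ (d:ℝ) := by
    have hswap : ∑ x ∈ E, e x
        = ∑ t, (∑ x ∈ E, if x ∈ Lw t then (1:ℝ) else 0) / ((Lw t).card:ℝ) := by
      simp only [he_def]
      rw [Finset.sum_comm]
      exact Finset.sum_congr rfl fun t _ => (Finset.sum_div _ _ _).symm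
    rw [hswap]
    have hterm : ∀ t : Fin d,
        (∑ x ∈ E, if x ∈ Lw t then (1:ℝ) else 0) / ((Lw t).card:ℝ) ≤ 1 := by
      intro t
      have hmpos : (0:ℝ) < ((Lw t).card : ℝ) := by
        have := hm3 t; exact_mod_cast Nat.lt_of_lt_of_le (by norm_num) this
      rw [div_le_one hmpos]
      have hbool : (∑ x ∈ E, if x ∈ Lw t then (1:ℝ) else 0)
          = ((E ∩ Lw t).card : ℝ) := by
        simp [Finset.sum_boole, Finset.filter_mem_eq_inter]
      rw [hbool]
      exact_mod_cast Finset.card_le_card Finset.inter_subset_right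
    calc ∑ t, (∑ x ∈ E, if x ∈ Lw t then (1:ℝ) else 0) / ((Lw t).card:ℝ)
        ≤ ∑ _t : Fin d, (1:ℝ) := Finset.sum_le_sum fun t _ => hterm t
      _ = (d:ℝ) := by simp
  have he_nonneg : ∀ x, 0 ≤ e x := by
    intro x
    apply Finset.sum_nonneg
    intro t _
    have hmpos : (0:ℝ) < ((Lw t).card : ℝ) := by
      have := hm3 t; exact_mod_cast Nat.lt_of_lt_of_le (by norm_num) this
    positivity
  -- Jensen
  have hjensen : n * b ^ ((∑ x ∈ E, e x)/n) ≤ ∑ x ∈ E, b ^ (e x) := by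
    have h := convexOn_exp.map_sum_le (t := E) (w := fun _ => 1/n)
      (p := fun x => Real.log b * e x) (fun _ _ => by positivity)
      (by rw [Finset.sum_const, nsmul_eq_mul, ← hn_def]; field_simp) (fun _ _ => Set.mem_univ _)
    simp only [smul_eq_mul] at h
    have hL : (∑ x ∈ E, (1/n) * (Real.log b * e x)) = Real.log b * ((∑ x ∈ E, e x)/n) := by
      rw [← Finset.mul_sum, ← Finset.mul_sum]; ring
    have hR : (∑ x ∈ E, (1/n) * Real.exp (Real.log b * e x))
        = (∑ x ∈ E, Real.exp (Real.log b * e x))/n := by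
      rw [← Finset.mul_sum]; ring
    rw [hL, hR] at h
    have key : b ^ ((∑ x ∈ E, e x)/n) ≤ (∑ x ∈ E, b ^ (e x))/n := by
      calc b ^ ((∑ x ∈ E, e x)/n) = Real.exp (Real.log b * ((∑ x ∈ E, e x)/n)) :=
            Real.rpow_def_of_pos hb0 _
        _ ≤ (∑ x ∈ E, Real.exp (Real.log b * e x))/n := h
        _ = (∑ x ∈ E, b ^ (e x))/n := by
            congr 1; exact Finset.sum_congr rfl fun x _ => (Real.rpow_def_of_pos hb0 _).symm
    rw [mul_comm]
    exact (le_div_iff₀ hnpos).1 key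
  -- the ideal lower bound n₀
  set n0 : ℝ := (d:ℝ) * ((q:ℝ)-2) / ((Δ:ℝ)-1) with hn0_def
  have hn0pos : 0 < n0 := by
    apply div_pos (by nlinarith) (by linarith)
  have hn0n : n0 ≤ n := by
    rw [hn0_def, div_le_iff₀ (by linarith)]
    nlinarith
  have hPhi : (d:ℝ) * Phi Δ q = n0 * b ^ ((d:ℝ)/n0) := by
    have h1 : (1 - 1 / ((q:ℝ)-(Δ:ℝ)+1)) ^ ((q:ℝ)-(Δ:ℝ)+1) = b := by
      rw [← hsR, Real.rpow_natCast, hb_def]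
    have h2 : ((Δ:ℝ)-1)/((q:ℝ)-2) = (d:ℝ)/n0 := by
      have hq2 : ((q:ℝ)-2) ≠ 0 := by linarith
      have hΔ1 : ((Δ:ℝ)-1) ≠ 0 := by linarith
      have hd0 : (d:ℝ) ≠ 0 := by linarith
      rw [hn0_def]
      field_simp
    simp only [Phi, h1, h2, hn0_def]
    ring
  -- final chain
  calc (d:ℝ) * Phi Δ q = n0 * b ^ ((d:ℝ)/n0) := hPhi
    _ ≤ n * b ^ ((d:ℝ)/n) := by
        apply mul_le_mul hn0n ?_ (Real.rpow_nonneg hb0.le _) hnpos.le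
        exact Real.rpow_le_rpow_of_exponent_ge hb0 hb1
          (div_le_div_of_nonneg_left (by linarith) hn0pos hn0n)
    _ ≤ n * b ^ ((∑ x ∈ E, e x)/n) := by
        apply mul_le_mul_of_nonneg_left ?_ hnpos.le
        exact Real.rpow_le_rpow_of_exponent_ge hb0 hb1 (by gcongr)
    _ ≤ ∑ x ∈ E, b ^ (e x) := hjensen
    _ ≤ ∑ x ∈ E, Nr x / Nr c := Finset.sum_le_sum fun x _ => hratio x
    _ = (∑ x ∈ E, Nr x) / Nr c := (Finset.sum_div _ _ _).symm
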